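/- Let k ≥ 1, suppose every school has quota at least one, suppose the student acquaintance graph G admits a tree decomposition (T, (B_t)) of width k, and suppose that for every school s the restriction of ≻_s to I is single-peaked on this tree decomposition. Then there exists a feasible matching that is Pareto efficient, locally ERF-(k−1), and mutually-best. -/

import Mathlib

section Defs

variable {I S : Type*}

/-- Students' preference profiles: `pI i a b` means student `i` strictly prefers option `a`
to option `b`, where `none` represents being unmatched. -/
abbrev StudentPrefs (I S : Type*) := I → Option S → Option S → Prop

/-- Schools' preference profiles: `pS s a b` means school `s` strictly prefers `a` to `b`,
where `none` represents leaving a seat vacant. -/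
abbrev SchoolPrefs (I S : Type*) := S → Option I → Option I → Prop

/-- Each student's preference is a strict linear order on `S ∪ {∅}`. -/
def ValidStudentPrefs (pI : StudentPrefs I S) : Prop :=
  ∀ i, IsStrictTotalOrder (Option S) (pI i)

/-- Each school's preference is a strict linear order on `I ∪ {∅}`. -/
def ValidSchoolPrefs (pS : SchoolPrefs I S) : Prop :=
  ∀ s, IsStrictTotalOrder (Option I) (pS s)

/-- A matching `μ : I → Option S` is feasible if each school's quota is respected. -/
def Feasible (q : S → ℕ) (μ : I → Option S) : Prop :=
  ∀ s : S, {i | μ i = some s}.ncard ≤ q s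

/-- Student `i` has justified envy toward student `i'` in matching `μ`. -/
def JEnvy (pI : StudentPrefs I S) (pS : SchoolPrefs I S)
    (μ : I → Option S) (i i' : I) : Prop :=
  ∃ s : S, μ i' = some s ∧ pI i (some s) (μ i) ∧ pS s (some i) (some i')

/-- Local envy: justified envy toward a neighbor in the student acquaintance graph `G`. -/
def LocalEnvy (G : SimpleGraph I) (pI : StudentPrefs I S) (pS : SchoolPrefs I S)
    (μ : I → Option S) (i i' : I) : Prop :=
  JEnvy pI pS μ i i' ∧ G.Adj i i'

/-- Locally envy-free matching. -/
def LEF (G : SimpleGraph I) (pI : StudentPrefs I S) (pS : SchoolPrefs I S)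
    (μ : I → Option S) : Prop :=
  ∀ i i', ¬ LocalEnvy G pI pS μ i i'

/-- Fair (justified-envy-free) matching. -/
def Fair (pI : StudentPrefs I S) (pS : SchoolPrefs I S) (μ : I → Option S) : Prop :=
  ∀ i i', ¬ JEnvy pI pS μ i i'

/-- Locally envy-free up to `k` peers: every student has local envy toward at most `k` students. -/
def LocEF (G : SimpleGraph I) (pI : StudentPrefs I S) (pS : SchoolPrefs I S)
    (k : ℕ) (μ : I → Option S) : Prop :=
  ∀ i, {i' | LocalEnvy G pI pS μ i i'}.ncard ≤ k

/-- Locally envy-receiving-free up to `k` peers: for every student at most `k` students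
have local envy toward her. -/
def LocERF (G : SimpleGraph I) (pI : StudentPrefs I S) (pS : SchoolPrefs I S)
    (k : ℕ) (μ : I → Option S) : Prop :=
  ∀ i, {i' | LocalEnvy G pI pS μ i' i}.ncard ≤ k

/-- `μ'` Pareto dominates `μ`. -/
def Dominates (pI : StudentPrefs I S) (μ' μ : I → Option S) : Prop :=
  (∀ i, μ' i = μ i ∨ pI i (μ' i) (μ i)) ∧ (∃ i, pI i (μ' i) (μ i))

/-- A feasible matching is Pareto efficient if no feasible matching Pareto dominates it. -/
def ParetoEfficient (pI : StudentPrefs I S) (q : S → ℕ) (μ : I → Option S) : Prop :=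
  ∀ μ', Feasible q μ' → ¬ Dominates pI μ' μ

/-- `(i, s)` is a mutually-best pair. -/
def MBPair (pI : StudentPrefs I S) (pS : SchoolPrefs I S) (i : I) (s : S) : Prop :=
  (∀ x : Option S, x ≠ some s → pI i (some s) x) ∧
  (∀ y : Option I, y ≠ some i → pS s (some i) y)

/-- A matching is mutually-best if every mutually-best pair is matched. -/
def MutuallyBest (pI : StudentPrefs I S) (pS : SchoolPrefs I S) (μ : I → Option S) : Prop :=
  ∀ i s, MBPair pI pS i s → μ i = some s

/-- The set of the `m` most-preferred elements under a strict order `r`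
(`r j i` meaning `j` is strictly preferred to `i`). -/
def topSet (r : I → I → Prop) (m : ℕ) : Set I := {i | {j | r j i}.ncard < m}

/-- A strict linear order on `I` is single-peaked on the graph `G` if for each
`m ∈ {1, …, |I|}` the set of the `m` most-preferred elements induces a connected
subgraph of `G`. -/
def SinglePeakedOn (G : SimpleGraph I) (r : I → I → Prop) : Prop :=
  ∀ m : ℕ, 1 ≤ m → m ≤ Nat.card I → (G.induce (topSet r m)).Connected

/-- `(T, bag)` is a tree decomposition of `G`. -/
structure IsTreeDecomp {V : Type*} (G : SimpleGraph I) (T : SimpleGraph V)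
    (bag : V → Set I) : Prop where
  tree : T.IsTree
  covers : ∀ i : I, ∃ t, i ∈ bag t
  subtree : ∀ i : I, (T.induce {t | i ∈ bag t}).Connected
  edges : ∀ ⦃i i' : I⦄, G.Adj i i' → ∃ t, i ∈ bag t ∧ i' ∈ bag t

/-- `G` has treewidth at most `k`: it admits a tree decomposition of width at most `k`. -/
def TreewidthAtMost (G : SimpleGraph I) (k : ℕ) : Prop :=
  ∃ (V : Type) (T : SimpleGraph V) (bag : V → Set I),
    Finite V ∧ IsTreeDecomp G T bag ∧ ∀ t, (bag t).ncard ≤ k + 1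

/-- `G` is `k`-degenerate: there is a linear ordering of the vertices (an injection
into `ℕ`) such that every vertex has at most `k` neighbors occurring strictly later. -/
def Degenerate (G : SimpleGraph I) (k : ℕ) : Prop :=
  ∃ ord : I → ℕ, Function.Injective ord ∧
    ∀ i, {i' | G.Adj i i' ∧ ord i < ord i'}.ncard ≤ k

/-- The first index `j` in the list `L` of bags such that `i ∈ bag (L.get j)`. -/
noncomputable def firstBagIdx {V : Type*} (L : List V) (bag : V → Set I) (i : I) : ℕ :=
  sInf {j | ∃ h : j < L.length, i ∈ bag (L.get ⟨j, h⟩)}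

/-- A strict linear order on `I` is single-peaked on a tree decomposition `(T, bag)` if
there is a sequence of nodes covering all vertices, each node after the first adjacent in
`T` to an earlier one, such that vertices first covered earlier are preferred. -/
def SinglePeakedOnTD {V : Type*} (T : SimpleGraph V) (bag : V → Set I)
    (r : I → I → Prop) : Prop :=
  ∃ L : List V,
    (∀ i : I, ∃ j : ℕ, ∃ h : j < L.length, i ∈ bag (L.get ⟨j, h⟩)) ∧
    (∀ j : ℕ, ∀ h : j < L.length, 1 ≤ j →
      ∃ j' : ℕ, ∃ h' : j' < L.length, j' < j ∧ T.Adj (L.get ⟨j', h'⟩) (L.get ⟨j, h⟩)) ∧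
    (∀ i i' : I, firstBagIdx L bag i < firstBagIdx L bag i' → r i i')

/-- `(i, s)` is a blocking pair for the feasible matching `μ`. -/
def BlockingPair (pI : StudentPrefs I S) (pS : SchoolPrefs I S) (q : S → ℕ)
    (μ : I → Option S) (i : I) (s : S) : Prop :=
  μ i ≠ some s ∧ pI i (some s) (μ i) ∧
  (({i' | μ i' = some s}.ncard < q s ∧ pS s (some i) none) ∨
   ({i' | μ i' = some s}.ncard = q s ∧
     ∃ i₀, μ i₀ = some s ∧
       (∀ i₁, μ i₁ = some s → i₁ = i₀ ∨ pS s (some i₁) (some i₀)) ∧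
       pS s (some i) (some i₀)))

/-- A matching is locally stable if for every blocking pair `(i, s)`, no neighbor of `i`
is matched to `s`. -/
def LocallyStable (G : SimpleGraph I) (pI : StudentPrefs I S) (pS : SchoolPrefs I S)
    (q : S → ℕ) (μ : I → Option S) : Prop :=
  ∀ i s, BlockingPair pI pS q μ i s → ∀ i', G.Adj i i' → μ i' ≠ some s

/-- Strategyproofness of a mechanism `f` (the schools' side being fixed). -/
def Strategyproof (f : StudentPrefs I S → (I → Option S)) : Prop :=
  ∀ pI : StudentPrefs I S, ValidStudentPrefs pI → ∀ i : I,
    ∀ pI' : StudentPrefs I S, ValidStudentPrefs pI' →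
      (∀ i'' : I, i'' ≠ i → pI' i'' = pI i'') →
      f pI i = f pI' i ∨ pI i (f pI i) (f pI' i)

end Defs

section AuxProof

open SimpleGraph

variable {V : Type*} {T : SimpleGraph V}

/-- Connectivity of a set via walks staying inside the set. -/
def ConnVia (T : SimpleGraph V) (A : Set V) : Prop :=
  ∀ x ∈ A, ∀ y ∈ A, ∃ w : T.Walk x y, ∀ z ∈ w.support, z ∈ A

lemma connVia_of_induce {A : Set V} (h : (T.induce A).Connected) :
    ConnVia T A := by
  intro x hx y hy
  obtain ⟨w0⟩ := h.preconnected ⟨x, hx⟩ ⟨y, hy⟩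
  refine ⟨w0.map (SimpleGraph.Embedding.induce A).toHom, ?_⟩
  intro z hz
  replace hz : z ∈ (w0.map (SimpleGraph.Embedding.induce A).toHom).support := hz
  rw [SimpleGraph.Walk.support_map, List.mem_map] at hz
  obtain ⟨⟨z', hz'⟩, _, rfl⟩ := hz
  exact hz'

lemma connVia_insert {A : Set V} {u v : V} (hA : ConnVia T A) (hu : u ∈ A)
    (hadj : T.Adj u v) : ConnVia T (insert v A) := by
  have key : ∀ y ∈ A, ∃ w : T.Walk v y, ∀ z ∈ w.support, z ∈ insert v A := by
    intro y hy
    obtain ⟨w, hw⟩ := hA u hu y hy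
    refine ⟨SimpleGraph.Walk.cons hadj.symm w, ?_⟩
    intro z hz
    rw [SimpleGraph.Walk.support_cons, List.mem_cons] at hz
    rcases hz with rfl | hz
    · exact Set.mem_insert _ _
    · exact Set.mem_insert_of_mem _ (hw z hz)
  intro x hx y hy
  rcases Set.mem_insert_iff.mp hx with hx1 | hx1
  · rcases Set.mem_insert_iff.mp hy with hy1 | hy1
    · subst hx1; subst hy1; exact ⟨SimpleGraph.Walk.nil, by simp⟩
    · subst hx1; exact key y hy1
  · rcases Set.mem_insert_iff.mp hy with hy1 | hy1
    · subst hy1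
      obtain ⟨w, hw⟩ := key x hx1
      refine ⟨w.reverse, ?_⟩
      intro z hz
      rw [SimpleGraph.Walk.support_reverse] at hz
      exact hw z (List.mem_reverse.mp hz)
    · obtain ⟨w, hw⟩ := hA x hx1 y hy1
      exact ⟨w, fun z hz => Set.mem_insert_of_mem _ (hw z hz)⟩

/-- In a tree, any path is contained in the support of any walk with the same endpoints. -/
lemma path_support_subset (hT : T.IsTree) {x y : V} (p w : T.Walk x y) (hp : p.IsPath) :
    p.support ⊆ w.support := by
  haveI : DecidableEq V := Classical.decEq V
  have hu := (SimpleGraph.isAcyclic_iff_path_unique.mp hT.IsAcyclic)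
    (⟨p, hp⟩ : T.Path x y) ⟨w.bypass, w.bypass_isPath⟩
  have : p = w.bypass := congrArg Subtype.val hu
  rw [this]
  exact w.support_bypass_subset

lemma scan_walk {A B : Set V} :
    ∀ {u v : V} (w : T.Walk u v), (∀ x ∈ w.support, x ∈ A ∪ B) → u ∈ A → v ∈ B →
      (∃ x ∈ w.support, x ∈ A ∧ x ∈ B) ∨
      (∃ a b, T.Adj a b ∧ a ∈ w.support ∧ b ∈ w.support ∧ a ∈ A ∧ b ∈ B) := by
  intro u v w
  induction w with
  | nil =>
    intro _ hu hv
    exact Or.inl ⟨_, by simp, hu, hv⟩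
  | @cons u u' v h w ih =>
    intro hsub hu hv
    by_cases hu'B : u' ∈ B
    · exact Or.inr ⟨u, u', h, by simp, by simp [SimpleGraph.Walk.support_cons,
        SimpleGraph.Walk.start_mem_support], hu, hu'B⟩
    · have hu'A : u' ∈ A := by
        have := hsub u' (by simp [SimpleGraph.Walk.support_cons,
          SimpleGraph.Walk.start_mem_support])
        rcases this with h1 | h1
        · exact h1
        · exact absurd h1 hu'B
      have hsub' : ∀ x ∈ w.support, x ∈ A ∪ B := by
        intro x hx
        exact hsub x (by simp [SimpleGraph.Walk.support_cons, hx])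
      rcases ih hsub' hu'A hv with ⟨x, hx, hxx⟩ | ⟨a, b, hab, ha, hb, haa, hbb⟩
      · exact Or.inl ⟨x, by simp [SimpleGraph.Walk.support_cons, hx], hxx⟩
      · exact Or.inr ⟨a, b, hab, by simp [SimpleGraph.Walk.support_cons, ha],
          by simp [SimpleGraph.Walk.support_cons, hb], haa, hbb⟩

lemma helly_base (hT : T.IsTree) {A B C : Set V} (hA : ConnVia T A) (hB : ConnVia T B)
    {a b r : V} (hab : T.Adj a b) (haA : a ∈ A) (haC : a ∈ C) (hbB : b ∈ B) (hbC : b ∈ C)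
    (hrA : r ∈ A) (hrB : r ∈ B) : ∃ w, w ∈ A ∧ w ∈ B ∧ w ∈ C := by
  haveI : DecidableEq V := Classical.decEq V
  obtain ⟨wbr, hwbr⟩ := hB b hbB r hrB
  set P := wbr.bypass with hP
  have hPpath : P.IsPath := wbr.bypass_isPath
  have hPsup : ∀ z ∈ P.support, z ∈ B := fun z hz => hwbr z (wbr.support_bypass_subset hz)
  by_cases haP : a ∈ P.support
  · exact ⟨a, haA, hPsup a haP, haC⟩
  · have hQpath : (SimpleGraph.Walk.cons hab P).IsPath := hPpath.cons haP
    obtain ⟨war, hwar⟩ := hA a haA r hrA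
    have hsub := path_support_subset hT (SimpleGraph.Walk.cons hab P) war hQpath
    have hbA : b ∈ A := hwar b (hsub (by simp [SimpleGraph.Walk.support_cons,
      SimpleGraph.Walk.start_mem_support]))
    exact ⟨b, hbA, hbB, hbC⟩

lemma helly3 (hT : T.IsTree) {A B C : Set V} (hA : ConnVia T A) (hB : ConnVia T B)
    (hC : ConnVia T C) {p q r : V} (hpB : p ∈ B) (hpC : p ∈ C) (hqA : q ∈ A) (hqC : q ∈ C)
    (hrA : r ∈ A) (hrB : r ∈ B) : ∃ w, w ∈ A ∧ w ∈ B ∧ w ∈ C := by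
  haveI : DecidableEq V := Classical.decEq V
  obtain ⟨wqr, hwqr⟩ := hA q hqA r hrA
  obtain ⟨wrp, hwrp⟩ := hB r hrB p hpB
  obtain ⟨wqp, hwqp⟩ := hC q hqC p hpC
  set D := (wqr.append wrp).bypass with hD
  have hDpath : D.IsPath := (wqr.append wrp).bypass_isPath
  have hDsupAB : ∀ z ∈ D.support, z ∈ A ∪ B := by
    intro z hz
    have := (wqr.append wrp).support_bypass_subset hz
    rw [SimpleGraph.Walk.mem_support_append_iff] at this
    rcases this with h1 | h1
    · exact Or.inl (hwqr z h1)
    · exact Or.inr (hwrp z h1)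
  have hDsupC : ∀ z ∈ D.support, z ∈ C := by
    intro z hz
    exact hwqp z (path_support_subset hT D wqp hDpath hz)
  rcases scan_walk D hDsupAB hqA hpB with ⟨x, hx, hxA, hxB⟩ | ⟨a, b, hab, ha, hb, haA, hbB⟩
  · exact ⟨x, hxA, hxB, hDsupC x hx⟩
  · exact helly_base hT hA hB hab haA (hDsupC a ha) hbB (hDsupC b hb) hrA hrB

section CoreGeom

variable {I : Type*} {V : Type*} {T : SimpleGraph V} {bag : V → Set I}

/-- The set of nodes appearing among the first `m+1` entries of `L`. -/
def prefixSet (L : List V) (m : ℕ) : Set V :=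
  {t | ∃ j, j ≤ m ∧ ∃ h : j < L.length, L.get ⟨j, h⟩ = t}

lemma connVia_prefixSet (L : List V)
    (hadj : ∀ j : ℕ, ∀ h : j < L.length, 1 ≤ j →
      ∃ j' : ℕ, ∃ h' : j' < L.length, j' < j ∧ T.Adj (L.get ⟨j', h'⟩) (L.get ⟨j, h⟩)) :
    ∀ m : ℕ, m < L.length → ConnVia T (prefixSet L m) := by
  intro m
  induction m with
  | zero =>
    intro hm
    intro a ha b hb
    obtain ⟨j, hj0, hj, hja⟩ := ha
    obtain ⟨j', hj0', hj', hjb⟩ := hb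
    have hj00 : j = 0 := Nat.le_zero.mp hj0
    subst hj00
    have hj00' : j' = 0 := Nat.le_zero.mp hj0'
    subst hj00'
    have hab : a = b := by rw [← hja, ← hjb]
    subst hab
    refine ⟨SimpleGraph.Walk.nil, ?_⟩
    intro z hz
    simp only [SimpleGraph.Walk.support_nil, List.mem_singleton] at hz
    subst hz
    exact ⟨0, le_refl 0, hj, hja⟩
  | succ m ih =>
    intro hm
    have hm' : m < L.length := Nat.lt_of_succ_lt hm
    have hset : prefixSet L (m + 1) = insert (L.get ⟨m + 1, hm⟩) (prefixSet L m) := by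
      ext t
      constructor
      · rintro ⟨j, hjle, hj, rfl⟩
        rcases Nat.lt_or_ge j (m + 1) with h1 | h1
        · exact Set.mem_insert_of_mem _ ⟨j, Nat.lt_succ_iff.mp h1, hj, rfl⟩
        · have : j = m + 1 := le_antisymm hjle h1
          subst this
          exact Set.mem_insert _ _
      · rintro (rfl | ⟨j, hjle, hj, rfl⟩)
        · exact ⟨m + 1, le_refl _, hm, rfl⟩
        · exact ⟨j, Nat.le_succ_of_le hjle, hj, rfl⟩
    obtain ⟨j', hj', hjlt, hadj'⟩ := hadj (m + 1) hm (Nat.succ_le_succ (Nat.zero_le m))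
    have hu : L.get ⟨j', hj'⟩ ∈ prefixSet L m := ⟨j', Nat.lt_succ_iff.mp hjlt, hj', rfl⟩
    rw [hset]
    exact connVia_insert (ih hm') hu hadj'

lemma firstBagIdx_spec (L : List V) (i : I)
    (hcov : ∃ j : ℕ, ∃ h : j < L.length, i ∈ bag (L.get ⟨j, h⟩)) :
    ∃ h : firstBagIdx L bag i < L.length, i ∈ bag (L.get ⟨firstBagIdx L bag i, h⟩) := by
  have hne : {j | ∃ h : j < L.length, i ∈ bag (L.get ⟨j, h⟩)}.Nonempty := by
    obtain ⟨j, hj, hij⟩ := hcov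
    exact ⟨j, hj, hij⟩
  exact Nat.sInf_mem hne

lemma firstBagIdx_le (L : List V) (i : I) {j : ℕ} (h : j < L.length)
    (hi : i ∈ bag (L.get ⟨j, h⟩)) : firstBagIdx L bag i ≤ j :=
  Nat.sInf_le ⟨h, hi⟩

/-- Core geometric lemma: if `x` and `y` share a bag and `x`'s first bag index is at most
`y`'s, then `x` belongs to the bag where `y` first appears. -/
lemma core_geom (htree : T.IsTree)
    (hsub : ∀ i : I, ConnVia T {t | i ∈ bag t}) (L : List V)
    (hcov : ∀ i : I, ∃ j : ℕ, ∃ h : j < L.length, i ∈ bag (L.get ⟨j, h⟩))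
    (hadj : ∀ j : ℕ, ∀ h : j < L.length, 1 ≤ j →
      ∃ j' : ℕ, ∃ h' : j' < L.length, j' < j ∧ T.Adj (L.get ⟨j', h'⟩) (L.get ⟨j, h⟩))
    {x y : I} {t₀ : V} (hx0 : x ∈ bag t₀) (hy0 : y ∈ bag t₀)
    (hle : firstBagIdx L bag x ≤ firstBagIdx L bag y)
    (hlen : firstBagIdx L bag y < L.length) :
    x ∈ bag (L.get ⟨firstBagIdx L bag y, hlen⟩) := by
  obtain ⟨hlx, hmemx⟩ := firstBagIdx_spec L x (hcov x)
  obtain ⟨hly, hmemy⟩ := firstBagIdx_spec L y (hcov y)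
  have hB : ConnVia T (prefixSet L (firstBagIdx L bag y)) := connVia_prefixSet L hadj _ hlen
  have hpB : L.get ⟨firstBagIdx L bag y, hly⟩ ∈ prefixSet L (firstBagIdx L bag y) :=
    ⟨firstBagIdx L bag y, le_refl _, hly, rfl⟩
  have hrB : L.get ⟨firstBagIdx L bag x, hlx⟩ ∈ prefixSet L (firstBagIdx L bag y) :=
    ⟨firstBagIdx L bag x, hle, hlx, rfl⟩
  obtain ⟨w, hwA, hwB, hwC⟩ := helly3 htree (hsub x) hB (hsub y)
    (p := L.get ⟨firstBagIdx L bag y, hly⟩) (q := t₀) (r := L.get ⟨firstBagIdx L bag x, hlx⟩)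
    hpB hmemy hx0 hy0 hmemx hrB
  obtain ⟨j', hj'le, hj', rfl⟩ := hwB
  have h1 : firstBagIdx L bag y ≤ j' := firstBagIdx_le L y hj' hwC
  have h2 : j' = firstBagIdx L bag y := le_antisymm hj'le h1
  subst h2
  exact hwA

end CoreGeom

section MaxSto

lemma exists_max_sto {α : Type*} (r : α → α → Prop) (hr : IsStrictTotalOrder α r)
    (s : Finset α) (hs : s.Nonempty) : ∃ m ∈ s, ∀ x ∈ s, x ≠ m → r m x := by
  classical
  induction s using Finset.induction_on with
  | empty => exact absurd hs (by simp)
  | @insert a t ha ih =>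
    rcases t.eq_empty_or_nonempty with rfl | ht
    · exact ⟨a, by simp, by intro x hx hne; simp at hx; exact absurd hx hne⟩
    · obtain ⟨m, hm, hmax⟩ := ih ht
      rcases (by haveI := hr; exact trichotomous_of r a m : r a m ∨ a = m ∨ r m a) with h1 | h1 | h1
      · refine ⟨a, Finset.mem_insert_self _ _, ?_⟩
        intro x hx hne
        rcases Finset.mem_insert.mp hx with rfl | hx
        · exact absurd rfl hne
        · by_cases hxm : x = m
          · subst hxm; exact h1
          · exact hr.trans _ _ _ h1 (hmax x hx hxm)
      · refine ⟨m, Finset.mem_insert_of_mem hm, ?_⟩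
        intro x hx hne
        rcases Finset.mem_insert.mp hx with rfl | hx
        · exact absurd h1 hne
        · exact hmax x hx hne
      · refine ⟨m, Finset.mem_insert_of_mem hm, ?_⟩
        intro x hx hne
        rcases Finset.mem_insert.mp hx with rfl | hx
        · exact h1
        · exact hmax x hx hne

lemma asymm_sto {α : Type*} {r : α → α → Prop} (hr : IsStrictTotalOrder α r)
    {a b : α} (h : r a b) : ¬ r b a := fun h' => hr.irrefl a (hr.trans _ _ _ h h')

end MaxSto

section MutualPair

variable {I : Type*} [Fintype I]

lemma mutual_pair (G : SimpleGraph I) [DecidableRel G.Adj] (k : ℕ) (hk : 1 ≤ k) (U : Finset I)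
    (hd : ∀ U' : Finset I, U' ⊆ U → U'.Nonempty →
      ∃ v ∈ U', ((U'.filter (fun u => G.Adj v u)).card ≤ k))
    (f : I → Finset I) (hf1 : ∀ i ∈ U, f i ⊆ U) (hf2 : ∀ i ∈ U, k ≤ (f i).card)
    (hf3 : ∀ i ∈ U, ∀ j ∈ f i, G.Adj i j) (hU : U.Nonempty) :
    ∃ i ∈ U, ∃ j ∈ f i, i ∈ f j := by
  classical
  induction U using Finset.strongInduction with
  | _ U ih =>
  obtain ⟨v, hv, hvdeg⟩ := hd U (le_refl _) hU
  by_cases hmut : ∃ j ∈ f v, v ∈ f j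
  · obtain ⟨j, hj, hjv⟩ := hmut
    exact ⟨v, hv, j, hj, hjv⟩
  · push_neg at hmut
    have hfsub : f v ⊆ U.filter (fun u => G.Adj v u) := by
      intro j hj
      exact Finset.mem_filter.mpr ⟨hf1 v hv hj, (hf3 v hv j hj).symm.symm⟩
    have hcard : k ≤ (U.filter (fun u => G.Adj v u)).card :=
      le_trans (hf2 v hv) (Finset.card_le_card hfsub)
    have hfeq : f v = U.filter (fun u => G.Adj v u) :=
      Finset.eq_of_subset_of_card_le hfsub (le_trans hvdeg (hf2 v hv))
    set U' := U.erase v with hU'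
    have hU'ne : U'.Nonempty := by
      by_contra hne
      rw [Finset.not_nonempty_iff_eq_empty] at hne
      have hUv : U = {v} := by
        apply Finset.eq_singleton_iff_unique_mem.mpr
        refine ⟨hv, fun x hx => ?_⟩
        by_contra hxv
        have : x ∈ U' := Finset.mem_erase.mpr ⟨hxv, hx⟩
        rw [hne] at this
        exact absurd this (by simp)
      obtain ⟨j, hj⟩ := Finset.card_pos.mp (lt_of_lt_of_le hk (hf2 v hv))
      have hjU : j ∈ U := hf1 v hv hj
      rw [hUv] at hjU
      have hjv : j = v := Finset.mem_singleton.mp hjU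
      exact G.irrefl (hjv ▸ hf3 v hv j hj)
    have hnomem : ∀ i ∈ U', v ∉ f i := by
      intro i hi hvfi
      have hadj : G.Adj v i := (hf3 i (Finset.mem_of_mem_erase hi) v hvfi).symm
      have : i ∈ f v := by
        rw [hfeq]
        exact Finset.mem_filter.mpr ⟨Finset.mem_of_mem_erase hi, hadj⟩
      exact hmut i this hvfi
    have hf1' : ∀ i ∈ U', f i ⊆ U' := by
      intro i hi j hj
      refine Finset.mem_erase.mpr ⟨?_, hf1 i (Finset.mem_of_mem_erase hi) hj⟩
      intro hjv
      subst hjv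
      exact hnomem i hi hj
    obtain ⟨i, hi, j, hj, hji⟩ := ih U' (Finset.erase_ssubset hv)
      (fun U'' hsub hne => hd U'' (hsub.trans (Finset.erase_subset _ _)) hne)
      hf1' (fun i hi => hf2 i (Finset.mem_of_mem_erase hi))
      (fun i hi => hf3 i (Finset.mem_of_mem_erase hi)) hU'ne
    exact ⟨i, Finset.mem_of_mem_erase hi, j, hj, hji⟩

end MutualPair

section Market

attribute [local instance] Classical.propDecidable

variable {I S : Type*} [Fintype I] [Fintype S] {V : Type*} [Finite V]
variable {k : ℕ} {G : SimpleGraph I} {T : SimpleGraph V} {bag : V → Set I}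
variable {pI : StudentPrefs I S} {pS : SchoolPrefs I S}

/-- Everyone that `s` prefers to `i` among `i`'s neighbors lies, together with `i`,
in a single bag; hence there are at most `k` of them. -/
lemma star_bound (htd : IsTreeDecomp G T bag) (hw : ∀ t, (bag t).ncard ≤ k + 1)
    (hpS : ValidSchoolPrefs pS)
    (hsp : ∀ s : S, SinglePeakedOnTD T bag (fun i i' => pS s (some i) (some i')))
    (s : S) (i : I) :
    {j : I | G.Adj j i ∧ pS s (some j) (some i)}.ncard ≤ k := by
  obtain ⟨L, hcov, hadjL, hmono⟩ := hsp s
  obtain ⟨hlen, himem⟩ := firstBagIdx_spec L i (hcov i)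
  set B := bag (L.get ⟨firstBagIdx L bag i, hlen⟩) with hB
  have hsub : {j : I | G.Adj j i ∧ pS s (some j) (some i)} ⊆ B \ {i} := by
    rintro j hj
    obtain ⟨hAdj, hpSj⟩ := hj
    have hle : firstBagIdx L bag j ≤ firstBagIdx L bag i := by
      by_contra hlt
      push_neg at hlt
      exact asymm_sto (hpS s) (hmono i j hlt) hpSj
    obtain ⟨t₀, hjb, hib⟩ := htd.edges hAdj
    have hjB : j ∈ B := core_geom htd.tree
      (fun x => connVia_of_induce (htd.subtree x)) L hcov hadjL hjb hib hle hlen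
    exact ⟨hjB, by simp [G.ne_of_adj hAdj]⟩
  have hfin : (B \ {i}).Finite := Set.toFinite _
  have h1 : {j : I | G.Adj j i ∧ pS s (some j) (some i)}.ncard ≤ (B \ {i}).ncard :=
    Set.ncard_le_ncard hsub hfin
  have h2 : (B \ {i}).ncard < B.ncard := by
    apply Set.ncard_lt_ncard _ (Set.toFinite _)
    rw [Set.ssubset_iff_of_subset Set.diff_subset]
    exact ⟨i, himem, by simp⟩
  have h3 : B.ncard ≤ k + 1 := hw _
  omega

/-- Degeneracy: every nonempty finite set of students contains one with at most `k`
neighbors inside the set. -/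
lemma degen_bound (htd : IsTreeDecomp G T bag) (hw : ∀ t, (bag t).ncard ≤ k + 1)
    (L : List V)
    (hcov : ∀ i : I, ∃ j : ℕ, ∃ h : j < L.length, i ∈ bag (L.get ⟨j, h⟩))
    (hadjL : ∀ j : ℕ, ∀ h : j < L.length, 1 ≤ j →
      ∃ j' : ℕ, ∃ h' : j' < L.length, j' < j ∧ T.Adj (L.get ⟨j', h'⟩) (L.get ⟨j, h⟩))
    (U' : Finset I) (hU' : U'.Nonempty) :
    ∃ v ∈ U', (U'.filter (fun u => G.Adj v u)).card ≤ k := by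
  obtain ⟨v, hv, hmax⟩ := U'.exists_max_image (fun i => firstBagIdx L bag i) hU'
  refine ⟨v, hv, ?_⟩
  obtain ⟨hlen, hvmem⟩ := firstBagIdx_spec L v (hcov v)
  set B := bag (L.get ⟨firstBagIdx L bag v, hlen⟩) with hB
  have hsub : (↑(U'.filter (fun u => G.Adj v u)) : Set I) ⊆ B \ {v} := by
    rintro u hu
    simp only [Finset.coe_filter, Set.mem_setOf_eq] at hu
    obtain ⟨huU, hAdj⟩ := hu
    obtain ⟨t₀, hvb, hub⟩ := htd.edges hAdj
    have huB : u ∈ B := core_geom htd.tree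
      (fun x => connVia_of_induce (htd.subtree x)) L hcov hadjL hub hvb
      (hmax u huU) hlen
    exact ⟨huB, by simp [(G.ne_of_adj hAdj).symm]⟩
  have h1 : (U'.filter (fun u => G.Adj v u)).card ≤ (B \ {v}).ncard := by
    rw [← Set.ncard_coe_finset]
    exact Set.ncard_le_ncard hsub (Set.toFinite _)
  have h2 : (B \ {v}).ncard < B.ncard := by
    apply Set.ncard_lt_ncard _ (Set.toFinite _)
    rw [Set.ssubset_iff_of_subset Set.diff_subset]
    exact ⟨v, hvmem, by simp⟩
  have h3 : B.ncard ≤ k + 1 := hw _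
  omega

end Market

section Lift

attribute [local instance] Classical.propDecidable

variable {I S : Type*} [Fintype I] [Fintype S]
variable {k : ℕ} {G : SimpleGraph I}
variable {pI : StudentPrefs I S} {pS : SchoolPrefs I S}

/-- Decrement of a capacity function by a chosen option. -/
noncomputable def capMinus (cap : S → ℕ) (o : Option S) : S → ℕ :=
  fun s => cap s - (if o = some s then 1 else 0)

lemma ncard_split {α : Type*} [Fintype α] (U : Finset α) (i₀ : α) (hi₀ : i₀ ∈ U)
    (P : α → Prop) (hP : P i₀) :
    {x : α | x ∈ U ∧ P x}.ncard = {x : α | x ∈ U.erase i₀ ∧ P x}.ncard + 1 := by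
  have hset : {x : α | x ∈ U ∧ P x} = insert i₀ {x : α | x ∈ U.erase i₀ ∧ P x} := by
    ext x
    constructor
    · rintro ⟨hxU, hPx⟩
      by_cases hx : x = i₀
      · exact Or.inl hx
      · exact Or.inr ⟨Finset.mem_erase.mpr ⟨hx, hxU⟩, hPx⟩
    · rintro (rfl | ⟨hx, hPx⟩)
      · exact ⟨hi₀, hP⟩
      · exact ⟨Finset.mem_of_mem_erase hx, hPx⟩
  rw [hset, Set.ncard_insert_of_notMem]
  rintro ⟨hmem, -⟩
  exact Finset.notMem_erase i₀ U hmem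

lemma ncard_split_neg {α : Type*} (U : Finset α) (i₀ : α)
    (P : α → Prop) (hP : ¬ P i₀) :
    {x : α | x ∈ U ∧ P x} = {x : α | x ∈ U.erase i₀ ∧ P x} := by
  ext x
  constructor
  · rintro ⟨hxU, hPx⟩
    refine ⟨Finset.mem_erase.mpr ⟨?_, hxU⟩, hPx⟩
    rintro rfl
    exact hP hPx
  · rintro ⟨hx, hPx⟩
    exact ⟨Finset.mem_of_mem_erase hx, hPx⟩

/-- The bundle of invariants carried through the serial-dictatorship recursion. -/
def GoodOn (G : SimpleGraph I) (pI : StudentPrefs I S) (pS : SchoolPrefs I S) (k : ℕ)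
    (U : Finset I) (cap : S → ℕ) (ν : I → Option S) : Prop :=
  (∀ i, i ∉ U → ν i = none) ∧
  (∀ s, {i : I | i ∈ U ∧ ν i = some s}.ncard ≤ cap s) ∧
  (∀ i ∈ U, ∀ s, ν i = some s → 1 ≤ cap s) ∧
  (∀ μ' : I → Option S, (∀ i ∈ U, μ' i = ν i ∨ pI i (μ' i) (ν i)) →
    (∃ i ∈ U, μ' i ≠ ν i) →
    ∃ s, cap s < {i : I | i ∈ U ∧ μ' i = some s}.ncard) ∧
  (∀ i ∈ U, ∀ s, ν i = some s →
    {i' : I | i' ∈ U ∧ G.Adj i' i ∧ pS s (some i') (some i) ∧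
      pI i' (some s) (ν i')}.ncard ≤ k - 1) ∧
  (∀ x ∈ U, ∀ s, MBPair pI pS x s → 1 ≤ cap s → ν x = some s)

lemma lift_step
    (U : Finset I) (cap : S → ℕ) (i₀ : I) (hi₀ : i₀ ∈ U) (o₀ : Option S)
    (hcap₀ : ∀ s, o₀ = some s → 1 ≤ cap s)
    (ν' : I → Option S)
    (hgood : GoodOn G pI pS k (U.erase i₀) (capMinus cap o₀) ν')
    (hpe₀ : ∀ z : Option S, z ≠ o₀ → pI i₀ z o₀ → ∃ s', z = some s' ∧ cap s' = 0)
    (hsafe₀ : ∀ s, 1 ≤ cap s → ¬ pI i₀ (some s) o₀)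
    (henv₀ : ∀ s, o₀ = some s →
      {i' : I | i' ∈ U.erase i₀ ∧ G.Adj i' i₀ ∧ pS s (some i') (some i₀) ∧
        pI i' (some s) (ν' i')}.ncard ≤ k - 1)
    (hmb₀ : ∀ x ∈ U, ∀ s, MBPair pI pS x s → 1 ≤ cap s →
      (x = i₀ ∧ o₀ = some s) ∨ (x ≠ i₀ ∧ 1 ≤ capMinus cap o₀ s)) :
    GoodOn G pI pS k U cap (Function.update ν' i₀ o₀) := by
  obtain ⟨hN', hF', hA', hPE', hE', hMB'⟩ := hgood
  set ν := Function.update ν' i₀ o₀ with hν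
  have hνi₀ : ν i₀ = o₀ := Function.update_self _ _ _
  have hνne : ∀ i, i ≠ i₀ → ν i = ν' i := fun i hi => Function.update_of_ne hi _ _
  have hcaple : ∀ s, capMinus cap o₀ s ≤ cap s := fun s => Nat.sub_le _ _
  constructor
  · -- (N)
    intro i hi
    have hne : i ≠ i₀ := fun h => hi (h ▸ hi₀)
    rw [hνne i hne]
    exact hN' i (fun h => hi (Finset.mem_of_mem_erase h))
  constructor
  · -- (F)
    intro s
    have hcongr : {i : I | i ∈ U.erase i₀ ∧ ν i = some s} =
        {i : I | i ∈ U.erase i₀ ∧ ν' i = some s} := by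
      ext i
      simp only [Set.mem_setOf_eq, and_congr_right_iff]
      intro hi
      rw [hνne i (Finset.ne_of_mem_erase hi)]
    have h3 := hF' s
    by_cases ho : o₀ = some s
    · have hsplit : {i : I | i ∈ U ∧ ν i = some s}.ncard =
          {i : I | i ∈ U.erase i₀ ∧ ν i = some s}.ncard + 1 :=
        ncard_split U i₀ hi₀ (fun i => ν i = some s)
          (show ν i₀ = some s by rw [hνi₀, ho])
      have hcm : capMinus cap o₀ s = cap s - 1 := by simp [capMinus, ho]
      have hc1 : 1 ≤ cap s := hcap₀ s ho
      rw [hcm] at h3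
      rw [hsplit, hcongr]
      omega
    · have hsplit : {i : I | i ∈ U ∧ ν i = some s} =
          {i : I | i ∈ U.erase i₀ ∧ ν i = some s} :=
        ncard_split_neg U i₀ (fun i => ν i = some s)
          (show ¬ ν i₀ = some s by rw [hνi₀]; exact ho)
      have hcm : capMinus cap o₀ s = cap s := by simp [capMinus, ho]
      rw [hcm] at h3
      rw [hsplit, hcongr]
      exact h3
  constructor
  · -- (A)
    intro i hi s hs
    by_cases hii : i = i₀
    · subst hii
      exact hcap₀ s (hνi₀ ▸ hs)
    · have hi' : i ∈ U.erase i₀ := Finset.mem_erase.mpr ⟨hii, hi⟩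
      have := hA' i hi' s (by rw [← hνne i hii]; exact hs)
      have := hcaple s
      omega
  constructor
  · -- (PE)
    intro μ' himp hdiff
    by_cases h0 : μ' i₀ = ν i₀
    · obtain ⟨j, hjU, hjne⟩ := hdiff
      have hjne' : j ≠ i₀ := by
        intro h; subst h; exact hjne h0
      have hj' : j ∈ U.erase i₀ := Finset.mem_erase.mpr ⟨hjne', hjU⟩
      have himp' : ∀ i ∈ U.erase i₀, μ' i = ν' i ∨ pI i (μ' i) (ν' i) := by
        intro i hi
        have := himp i (Finset.mem_of_mem_erase hi)
        rwa [hνne i (Finset.ne_of_mem_erase hi)] at this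
      have hdiff' : ∃ i ∈ U.erase i₀, μ' i ≠ ν' i := by
        refine ⟨j, hj', ?_⟩
        rwa [← hνne j hjne']
      obtain ⟨s, hs⟩ := hPE' μ' himp' hdiff'
      refine ⟨s, ?_⟩
      by_cases hμ : μ' i₀ = some s
      · have hsplit : {i : I | i ∈ U ∧ μ' i = some s}.ncard =
            {i : I | i ∈ U.erase i₀ ∧ μ' i = some s}.ncard + 1 :=
          ncard_split U i₀ hi₀ (fun i => μ' i = some s) hμ
        have := hcaple s
        have ho : o₀ = some s := by rw [← hνi₀, ← h0]; exact hμ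
        have hcm : capMinus cap o₀ s = cap s - 1 := by simp [capMinus, ho]
        have hc1 : 1 ≤ cap s := hcap₀ s ho
        rw [hcm] at hs
        rw [hsplit]
        omega
      · have hsplit : {i : I | i ∈ U ∧ μ' i = some s} =
            {i : I | i ∈ U.erase i₀ ∧ μ' i = some s} :=
          ncard_split_neg U i₀ (fun i => μ' i = some s) hμ
        have ho : o₀ ≠ some s := by
          intro h
          exact hμ (by rw [← hνi₀, ← h0] at h; exact h)
        have hcm : capMinus cap o₀ s = cap s := by simp [capMinus, ho]
        rw [hcm] at hs
        rw [hsplit]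
        exact hs
    · have himp₀ := himp i₀ hi₀
      rcases himp₀ with h1 | h1
      · exact absurd h1 h0
      · rw [hνi₀] at h1
        obtain ⟨s', hz, hcs⟩ := hpe₀ (μ' i₀) (by rwa [hνi₀] at h0) h1
        refine ⟨s', ?_⟩
        rw [hcs]
        have : i₀ ∈ {i : I | i ∈ U ∧ μ' i = some s'} := ⟨hi₀, hz⟩
        have hpos : 0 < {i : I | i ∈ U ∧ μ' i = some s'}.ncard := by
          rw [Set.ncard_pos (Set.toFinite _)]
          exact ⟨i₀, this⟩
        exact hpos
  constructor
  · -- (E)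
    intro i hi s hs
    by_cases hii : i = i₀
    · have ho : o₀ = some s := by rw [← hνi₀, ← hii]; exact hs
      have hsplit : {i' : I | i' ∈ U ∧ G.Adj i' i ∧ pS s (some i') (some i) ∧
          pI i' (some s) (ν i')} = {i' : I | i' ∈ U.erase i₀ ∧ G.Adj i' i ∧
          pS s (some i') (some i) ∧ pI i' (some s) (ν i')} := by
        rw [hii]
        exact ncard_split_neg U i₀
          (fun i' => G.Adj i' i₀ ∧ pS s (some i') (some i₀) ∧ pI i' (some s) (ν i'))
          (by rintro ⟨h, -, -⟩; exact G.irrefl h)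
      rw [hsplit]
      have hcongr : {i' : I | i' ∈ U.erase i₀ ∧ G.Adj i' i ∧ pS s (some i') (some i) ∧
          pI i' (some s) (ν i')} = {i' : I | i' ∈ U.erase i₀ ∧ G.Adj i' i₀ ∧
          pS s (some i') (some i₀) ∧ pI i' (some s) (ν' i')} := by
        rw [hii]
        ext i'
        simp only [Set.mem_setOf_eq, and_congr_right_iff]
        intro hi' _ _
        rw [hνne i' (Finset.ne_of_mem_erase hi')]
      rw [hcongr]
      exact henv₀ s ho
    · have hi' : i ∈ U.erase i₀ := Finset.mem_erase.mpr ⟨hii, hi⟩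
      have hs' : ν' i = some s := by rw [← hνne i hii]; exact hs
      have hcapge : 1 ≤ cap s := le_trans (hA' i hi' s hs') (hcaple s)
      have hnoti₀ : ¬ (G.Adj i₀ i ∧ pS s (some i₀) (some i) ∧
          pI i₀ (some s) (ν i₀)) := by
        rintro ⟨-, -, hp⟩
        rw [hνi₀] at hp
        exact hsafe₀ s hcapge hp
      have hsplit : {i' : I | i' ∈ U ∧ G.Adj i' i ∧ pS s (some i') (some i) ∧
          pI i' (some s) (ν i')} = {i' : I | i' ∈ U.erase i₀ ∧ G.Adj i' i ∧
          pS s (some i') (some i) ∧ pI i' (some s) (ν i')} :=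
        ncard_split_neg U i₀
          (fun i' => G.Adj i' i ∧ pS s (some i') (some i) ∧ pI i' (some s) (ν i')) hnoti₀
      rw [hsplit]
      have hcongr : {i' : I | i' ∈ U.erase i₀ ∧ G.Adj i' i ∧ pS s (some i') (some i) ∧
          pI i' (some s) (ν i')} = {i' : I | i' ∈ U.erase i₀ ∧ G.Adj i' i ∧
          pS s (some i') (some i) ∧ pI i' (some s) (ν' i')} := by
        ext i'
        simp only [Set.mem_setOf_eq, and_congr_right_iff]
        intro hi' _ _
        rw [hνne i' (Finset.ne_of_mem_erase hi')]
      rw [hcongr]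
      exact hE' i hi' s hs'
  · -- (MB)
    intro x hx s hpair hcs
    rcases hmb₀ x hx s hpair hcs with ⟨rfl, ho⟩ | ⟨hne, hc⟩
    · rw [hνi₀, ho]
    · have hx' : x ∈ U.erase i₀ := Finset.mem_erase.mpr ⟨hne, hx⟩
      rw [hνne x hne]
      exact hMB' x hx' s hpair hc

end Lift

section RecMain

attribute [local instance] Classical.propDecidable

variable {I S : Type*} [Fintype I] [Fintype S] {V : Type*} [Finite V]
variable {k : ℕ} {G : SimpleGraph I} {T : SimpleGraph V} {bag : V → Set I}
variable {pI : StudentPrefs I S} {pS : SchoolPrefs I S}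

lemma ncard_diff_le {X : Set I} {a : I} (ha : a ∈ X) (hX : X.ncard ≤ k) :
    (X \ {a}).ncard ≤ k - 1 := by
  have h2 : (X \ {a}).ncard < X.ncard := by
    apply Set.ncard_lt_ncard _ (Set.toFinite _)
    rw [Set.ssubset_iff_of_subset Set.diff_subset]
    exact ⟨a, ha, by simp⟩
  omega

lemma goodOn_empty (cap : S → ℕ) : GoodOn G pI pS k (∅ : Finset I) cap (fun _ => none) := by
  refine ⟨fun _ _ => rfl, ?_, ?_, ?_, ?_, ?_⟩
  · intro s
    have hset : {i : I | i ∈ (∅ : Finset I) ∧ (none : Option S) = some s} = ∅ := by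
      ext i; simp
    rw [hset, Set.ncard_empty]
    exact Nat.zero_le _
  · intro i hi
    exact absurd hi (by simp)
  · intro μ' _ hdiff
    obtain ⟨i, hi, -⟩ := hdiff
    exact absurd hi (by simp)
  · intro i hi
    exact absurd hi (by simp)
  · intro x hx
    exact absurd hx (by simp)

lemma rec_main (hk : 1 ≤ k) (htd : IsTreeDecomp G T bag)
    (hw : ∀ t, (bag t).ncard ≤ k + 1)
    (hpI : ValidStudentPrefs pI) (hpS : ValidSchoolPrefs pS)
    (hsp : ∀ s : S, SinglePeakedOnTD T bag (fun i i' => pS s (some i) (some i'))) :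
    ∀ n : ℕ, ∀ (U : Finset I) (cap : S → ℕ), U.card ≤ n →
      ∃ ν : I → Option S, GoodOn G pI pS k U cap ν := by
  intro n
  induction n with
  | zero =>
    intro U cap hcard
    have hU : U = ∅ := Finset.card_eq_zero.mp (Nat.le_zero.mp hcard)
    subst hU
    exact ⟨_, goodOn_empty cap⟩
  | succ n ih =>
    intro U cap hcard
    rcases U.eq_empty_or_nonempty with rfl | hUne
    · exact ⟨_, goodOn_empty cap⟩
    by_cases hR0 : ∃ x ∈ U, ∃ s, MBPair pI pS x s ∧ 1 ≤ cap s
    · -- mutually-best pair step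
      obtain ⟨x₀, hx₀U, s₀, hpair₀, hcaps₀⟩ := hR0
      have herase : (U.erase x₀).card ≤ n := by
        rw [Finset.card_erase_of_mem hx₀U]
        omega
      obtain ⟨ν', hg'⟩ := ih (U.erase x₀) (capMinus cap (some s₀)) herase
      refine ⟨_, lift_step U cap x₀ hx₀U (some s₀) ?_ ν' hg' ?_ ?_ ?_ ?_⟩
      · intro s hs
        injection hs with hs
        subst hs
        exact hcaps₀
      · intro z hz hpz
        exact (asymm_sto (hpI x₀) (hpair₀.1 z hz) hpz).elim
      · intro s hcs hp
        by_cases h : some s = some s₀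
        · injection h with h
          subst h
          exact (hpI x₀).irrefl _ hp
        · exact asymm_sto (hpI x₀) (hpair₀.1 (some s) h) hp
      · intro s hs
        injection hs with hs
        subst hs
        have hset : {i' : I | i' ∈ U.erase x₀ ∧ G.Adj i' x₀ ∧ pS s₀ (some i') (some x₀) ∧
            pI i' (some s₀) (ν' i')} = ∅ := by
          ext i'
          simp only [Set.mem_setOf_eq, Set.mem_empty_iff_false, iff_false]
          rintro ⟨hi', hadj, hps, -⟩
          have hne : (some i' : Option I) ≠ some x₀ := by
            simp only [ne_eq, Option.some_inj]
            exact Finset.ne_of_mem_erase hi'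
          exact asymm_sto (hpS s₀) (hpair₀.2 (some i') hne) hps
        rw [hset, Set.ncard_empty]
        exact Nat.zero_le _
      · intro x hx s hpair hcs
        by_cases hxx : x = x₀
        · refine Or.inl ⟨hxx, ?_⟩
          by_cases hss : s = s₀
          · rw [hss]
          · exfalso
            have h1 := hpair.1 (some s₀) (fun h => hss (Option.some_inj.mp h).symm)
            have h2 := hpair₀.1 (some s) (fun h => hss (Option.some_inj.mp h))
            rw [hxx] at h1
            exact asymm_sto (hpI x₀) h2 h1
        · refine Or.inr ⟨hxx, ?_⟩
          have hss : s ≠ s₀ := by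
            intro h
            subst h
            have h1 := hpair.2 (some x₀) (fun h => hxx (Option.some_inj.mp h).symm)
            have h2 := hpair₀.2 (some x) (fun h => hxx (Option.some_inj.mp h))
            exact asymm_sto (hpS s) h1 h2
          have hneq : (some s₀ : Option S) ≠ some s :=
            fun h => hss (Option.some_inj.mp h).symm
          have : capMinus cap (some s₀) s = cap s := by
            simp [capMinus, hneq]
          omega
    · -- no available mutually-best pair; set up the "top choice" function
      have hO : ∀ i : I, ∃ m ∈ insert none ((Finset.univ.filter fun s : S =>
          1 ≤ cap s).image some), ∀ z ∈ insert none ((Finset.univ.filter fun s : S =>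
          1 ≤ cap s).image some), z ≠ m → pI i m z :=
        fun i => exists_max_sto (pI i) (hpI i) _ ⟨none, Finset.mem_insert_self _ _⟩
      choose top htopmem htopmax using hO
      have hmemO : ∀ o : Option S, o ∈ insert none ((Finset.univ.filter fun s : S =>
          1 ≤ cap s).image some) ↔ (o = none ∨ ∃ s, 1 ≤ cap s ∧ o = some s) := by
        intro o
        simp only [Finset.mem_insert, Finset.mem_image, Finset.mem_filter,
          Finset.mem_univ, true_and]
        constructor
        · rintro (rfl | ⟨s, hs, rfl⟩)
          · exact Or.inl rfl
          · exact Or.inr ⟨s, hs, rfl⟩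
        · rintro (rfl | ⟨s, hs, rfl⟩)
          · exact Or.inl rfl
          · exact Or.inr ⟨s, hs, rfl⟩
      have htopcap : ∀ i s, top i = some s → 1 ≤ cap s := by
        intro i s hts
        have := (hmemO (top i)).mp (htopmem i)
        rcases this with h | ⟨s', hs', h⟩
        · rw [hts] at h; exact absurd h (by simp)
        · rw [hts] at h
          injection h with h
          subst h
          exact hs'
      have hsafe_top : ∀ i s, 1 ≤ cap s → ¬ pI i (some s) (top i) := by
        intro i s hcs hp
        by_cases h : some s = top i
        · rw [h] at hp
          exact (hpI i).irrefl _ hp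
        · have hmem : (some s) ∈ insert none ((Finset.univ.filter fun s : S =>
              1 ≤ cap s).image some) := (hmemO _).mpr (Or.inr ⟨s, hcs, rfl⟩)
          exact asymm_sto (hpI i) (htopmax i (some s) hmem h) hp
      have hpe_top : ∀ i z, z ≠ top i → pI i z (top i) →
          ∃ s', z = some s' ∧ cap s' = 0 := by
        intro i z hz hpz
        cases z with
        | none =>
          have hmem : (none : Option S) ∈ insert none ((Finset.univ.filter fun s : S =>
              1 ≤ cap s).image some) := Finset.mem_insert_self _ _
          exact (asymm_sto (hpI i) (htopmax i none hmem hz) hpz).elim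
        | some s' =>
          refine ⟨s', rfl, ?_⟩
          by_contra hc
          have hcs : 1 ≤ cap s' := by omega
          have hmem : (some s') ∈ insert none ((Finset.univ.filter fun s : S =>
              1 ≤ cap s).image some) := (hmemO _).mpr (Or.inr ⟨s', hcs, rfl⟩)
          exact asymm_sto (hpI i) (htopmax i (some s') hmem hz) hpz
      by_cases hR1 : ∃ i ∈ U, top i = none
      · obtain ⟨i₁, hi₁, htop1⟩ := hR1
        have herase : (U.erase i₁).card ≤ n := by
          rw [Finset.card_erase_of_mem hi₁]; omega
        obtain ⟨ν', hg'⟩ := ih (U.erase i₁) (capMinus cap none) herase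
        refine ⟨_, lift_step U cap i₁ hi₁ none ?_ ν' hg' ?_ ?_ ?_ ?_⟩
        · intro s hs
          exact absurd hs (by simp)
        · intro z hz hpz
          exact hpe_top i₁ z (by rw [htop1]; exact hz) (by rw [htop1]; exact hpz)
        · intro s hcs hp
          exact hsafe_top i₁ s hcs (by rw [htop1]; exact hp)
        · intro s hs
          exact absurd hs (by simp)
        · intro x hx s hpair hcs
          exact absurd ⟨x, hx, s, hpair, hcs⟩ hR0
      · by_cases hR2 : ∃ i ∈ U, ∃ s, top i = some s ∧
            {j : I | j ∈ U ∧ G.Adj j i ∧ pS s (some j) (some i)}.ncard ≤ k - 1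
        · obtain ⟨i₂, hi₂, s₂, htop2, hE2⟩ := hR2
          have herase : (U.erase i₂).card ≤ n := by
            rw [Finset.card_erase_of_mem hi₂]; omega
          obtain ⟨ν', hg'⟩ := ih (U.erase i₂) (capMinus cap (some s₂)) herase
          refine ⟨_, lift_step U cap i₂ hi₂ (some s₂) ?_ ν' hg' ?_ ?_ ?_ ?_⟩
          · intro s hs
            injection hs with hs
            subst hs
            exact htopcap i₂ s₂ htop2
          · intro z hz hpz
            exact hpe_top i₂ z (by rw [htop2]; exact hz) (by rw [htop2]; exact hpz)
          · intro s hcs hp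
            exact hsafe_top i₂ s hcs (by rw [htop2]; exact hp)
          · intro s hs
            injection hs with hs
            subst hs
            refine le_trans (Set.ncard_le_ncard ?_ (Set.toFinite _)) hE2
            rintro i' ⟨hi', hadj, hps, -⟩
            exact ⟨Finset.mem_of_mem_erase hi', hadj, hps⟩
          · intro x hx s hpair hcs
            exact absurd ⟨x, hx, s, hpair, hcs⟩ hR0
        · -- deadlock: find a mutual pair
          have hall : ∀ i ∈ U, ∃ s, top i = some s ∧
              ¬ {j : I | j ∈ U ∧ G.Adj j i ∧ pS s (some j) (some i)}.ncard ≤ k - 1 := by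
            intro i hi
            cases htopi : top i with
            | none => exact absurd ⟨i, hi, htopi⟩ hR1
            | some s =>
              refine ⟨s, rfl, ?_⟩
              intro hle
              exact hR2 ⟨i, hi, s, htopi, hle⟩
          choose sch hsch hscard using hall
          obtain ⟨i₀U, hi₀U⟩ := hUne
          obtain ⟨L₀, hcov₀, hadjL₀, -⟩ := hsp (sch i₀U hi₀U)
          have hd : ∀ U' : Finset I, U' ⊆ U → U'.Nonempty →
              ∃ v ∈ U', (U'.filter (fun u => G.Adj v u)).card ≤ k :=
            fun U' _ hne => degen_bound htd hw L₀ hcov₀ hadjL₀ U' hne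
          have hcardset : ∀ (i : I) (hi : i ∈ U),
              (U.filter (fun j => G.Adj j i ∧ pS (sch i hi) (some j) (some i))).card =
              {j : I | j ∈ U ∧ G.Adj j i ∧ pS (sch i hi) (some j) (some i)}.ncard := by
            intro i hi
            rw [← Set.ncard_coe_finset]
            congr 1
            ext j
            simp
          obtain ⟨ia, hiaU, ja, hjaf, hiaf⟩ := mutual_pair G k hk U hd
            (fun i => if h : i ∈ U then
              U.filter (fun j => G.Adj j i ∧ pS (sch i h) (some j) (some i)) else ∅)
            (by
              intro i hi
              rw [dif_pos hi]
              exact Finset.filter_subset _ _)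
            (by
              intro i hi
              rw [dif_pos hi]
              rw [hcardset i hi]
              have := hscard i hi
              omega)
            (by
              intro i hi j hj
              rw [dif_pos hi] at hj
              exact (Finset.mem_filter.mp hj).2.1.symm)
            ⟨i₀U, hi₀U⟩
          rw [dif_pos hiaU] at hjaf
          obtain ⟨hjaU, hAdjji, hpSi⟩ := Finset.mem_filter.mp hjaf
          rw [dif_pos hjaU] at hiaf
          obtain ⟨-, hAdjij, hpSa⟩ := Finset.mem_filter.mp hiaf
          set si := sch ia hiaU with hsidef
          set sa := sch ja hjaU with hsadef
          have htopia : top ia = some si := hsch ia hiaU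
          have htopja : top ja = some sa := hsch ja hjaU
          have hcapsi : 1 ≤ cap si := htopcap ia si htopia
          have hcapsa : 1 ≤ cap sa := htopcap ja sa htopja
          have hsine : si ≠ sa := by
            intro h
            rw [h] at hpSi
            exact asymm_sto (hpS sa) hpSa hpSi
          have hjane : ja ≠ ia := G.ne_of_adj hAdjji
          have hja' : ja ∈ U.erase ia := Finset.mem_erase.mpr ⟨hjane, hjaU⟩
          have hcard'' : ((U.erase ia).erase ja).card ≤ n := by
            have h1 : ((U.erase ia).erase ja).card ≤ (U.erase ia).card :=
              Finset.card_le_card (Finset.erase_subset _ _)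
            rw [Finset.card_erase_of_mem hiaU] at h1
            omega
          obtain ⟨ν'', hg''⟩ := ih ((U.erase ia).erase ja)
            (capMinus (capMinus cap (some si)) (some sa)) hcard''
          have hcapsa' : 1 ≤ capMinus cap (some si) sa := by
            have : capMinus cap (some si) sa = cap sa := by
              simp [capMinus, hsine]
            omega
          have hstar_ja : {j : I | G.Adj j ja ∧ pS sa (some j) (some ja)}.ncard ≤ k :=
            star_bound htd hw hpS hsp sa ja
          have hstar_ia : {j : I | G.Adj j ia ∧ pS si (some j) (some ia)}.ncard ≤ k :=
            star_bound htd hw hpS hsp si ia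
          have hgood' := lift_step (U.erase ia) (capMinus cap (some si)) ja hja'
            (some sa)
            (by
              intro s hs
              injection hs with hs
              subst hs
              exact hcapsa')
            ν'' hg''
            (by
              intro z hz hpz
              obtain ⟨s', hz', hcs'⟩ := hpe_top ja z (by rw [htopja]; exact hz)
                (by rw [htopja]; exact hpz)
              refine ⟨s', hz', ?_⟩
              have : capMinus cap (some si) s' ≤ cap s' := Nat.sub_le _ _
              omega)
            (by
              intro s hcs hp
              have h1 : 1 ≤ cap s := le_trans hcs (Nat.sub_le _ _)
              exact hsafe_top ja s h1 (by rw [htopja]; exact hp))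
            (by
              intro s hs
              injection hs with hs
              subst hs
              have hsub : {i' : I | i' ∈ (U.erase ia).erase ja ∧ G.Adj i' ja ∧
                  pS sa (some i') (some ja) ∧ pI i' (some sa) (ν'' i')} ⊆
                  {j : I | G.Adj j ja ∧ pS sa (some j) (some ja)} \ {ia} := by
                rintro i' ⟨hi', hadj, hps, -⟩
                refine ⟨⟨hadj, hps⟩, ?_⟩
                simp only [Set.mem_singleton_iff]
                exact Finset.ne_of_mem_erase (Finset.mem_of_mem_erase hi')
              refine le_trans (Set.ncard_le_ncard hsub (Set.toFinite _)) ?_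
              exact ncard_diff_le ⟨hAdjij, hpSa⟩ hstar_ja)
            (by
              intro x hx s hpair hcs
              exact absurd ⟨x, Finset.mem_of_mem_erase hx, s, hpair,
                le_trans hcs (Nat.sub_le _ _)⟩ hR0)
          refine ⟨_, lift_step U cap ia hiaU (some si)
            (by
              intro s hs
              injection hs with hs
              subst hs
              exact hcapsi)
            _ hgood'
            (by
              intro z hz hpz
              exact hpe_top ia z (by rw [htopia]; exact hz) (by rw [htopia]; exact hpz))
            (by
              intro s hcs hp
              exact hsafe_top ia s hcs (by rw [htopia]; exact hp))
            (by
              intro s hs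
              injection hs with hs
              subst hs
              have hsub : {i' : I | i' ∈ U.erase ia ∧ G.Adj i' ia ∧
                  pS si (some i') (some ia) ∧
                  pI i' (some si) (Function.update ν'' ja (some sa) i')} ⊆
                  {j : I | G.Adj j ia ∧ pS si (some j) (some ia)} \ {ja} := by
                rintro i' ⟨hi', hadj, hps, hpi⟩
                refine ⟨⟨hadj, hps⟩, ?_⟩
                simp only [Set.mem_singleton_iff]
                intro hija
                subst hija
                rw [Function.update_self] at hpi
                exact hsafe_top i' si hcapsi (by rw [htopja]; exact hpi)
              refine le_trans (Set.ncard_le_ncard hsub (Set.toFinite _)) ?_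
              exact ncard_diff_le ⟨hAdjji, hpSi⟩ hstar_ia)
            (by
              intro x hx s hpair hcs
              exact absurd ⟨x, hx, s, hpair, hcs⟩ hR0)⟩

end RecMain

end AuxProof

/-- if every school has quota at least one, `G` has a tree decomposition of
width at most `k` (`k ≥ 1`), and schools' preferences are single-peaked on this tree
decomposition, then a feasible matching exists that is Pareto efficient, locally
ERF-(k-1), and mutually-best. -/
theorem pe_locerf_mb_on_treewidth_k {I S : Type*} [Fintype I] [Fintype S] [Nonempty I]
    {V : Type*} [Finite V] (k : ℕ) (hk : 1 ≤ k)
    (G : SimpleGraph I) (T : SimpleGraph V) (bag : V → Set I)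
    (htd : IsTreeDecomp G T bag) (hw : ∀ t, (bag t).ncard ≤ k + 1)
    (pI : StudentPrefs I S) (pS : SchoolPrefs I S) (q : S → ℕ)
    (hpI : ValidStudentPrefs pI) (hpS : ValidSchoolPrefs pS)
    (hq : ∀ s, 1 ≤ q s)
    (hsp : ∀ s : S, SinglePeakedOnTD T bag (fun i i' => pS s (some i) (some i'))) :
    ∃ μ : I → Option S, Feasible q μ ∧ ParetoEfficient pI q μ ∧
      LocERF G pI pS (k - 1) μ ∧ MutuallyBest pI pS μ := by
  classical
  obtain ⟨ν, hN, hF, hA, hPE, hE, hMB⟩ :=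
    rec_main hk htd hw hpI hpS hsp Finset.univ.card Finset.univ q (le_refl _)
  refine ⟨ν, ?_, ?_, ?_, ?_⟩
  · intro s
    have h := hF s
    have hset : {i : I | ν i = some s} =
        {i : I | i ∈ (Finset.univ : Finset I) ∧ ν i = some s} := by
      ext i; simp
    rw [hset]
    exact h
  · intro μ' hfeas hdom
    obtain ⟨h1, i₀, h2⟩ := hdom
    have hdiff : ∃ i ∈ (Finset.univ : Finset I), μ' i ≠ ν i :=
      ⟨i₀, Finset.mem_univ _, fun h => (hpI i₀).irrefl _ (h ▸ h2)⟩
    obtain ⟨s, hs⟩ := hPE μ' (fun i _ => h1 i) hdiff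
    have hf := hfeas s
    have hset : {i : I | i ∈ (Finset.univ : Finset I) ∧ μ' i = some s} =
        {i : I | μ' i = some s} := by
      ext i; simp
    rw [hset] at hs
    omega
  · intro i
    by_cases h : ∃ s, ν i = some s
    · obtain ⟨s, hs⟩ := h
      have hset : {i' : I | LocalEnvy G pI pS ν i' i} =
          {i' : I | i' ∈ (Finset.univ : Finset I) ∧ G.Adj i' i ∧
            pS s (some i') (some i) ∧ pI i' (some s) (ν i')} := by
        ext i'
        simp only [Set.mem_setOf_eq, Finset.mem_univ, true_and]
        constructor
        · rintro ⟨⟨s', hs', hpi, hps⟩, hadj⟩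
          rw [hs] at hs'
          injection hs' with hs'
          subst hs'
          exact ⟨hadj, hps, hpi⟩
        · rintro ⟨hadj, hps, hpi⟩
          exact ⟨⟨s, hs, hpi, hps⟩, hadj⟩
      rw [hset]
      exact hE i (Finset.mem_univ _) s hs
    · have hset : {i' : I | LocalEnvy G pI pS ν i' i} = ∅ := by
        ext i'
        simp only [Set.mem_empty_iff_false, iff_false, Set.mem_setOf_eq]
        rintro ⟨⟨s', hs', -, -⟩, -⟩
        exact h ⟨s', hs'⟩
      rw [hset, Set.ncard_empty]
      exact Nat.zero_le _
  · intro i s hpair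
    exact hMB i (Finset.mem_univ _) s hpair (hq s)
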